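/- (Vanishing of odd moments.) Let P and Q be Hermitian (N+1)×(N+1) complex matrices, each tridiagonal with zero diagonal (entries nonzero only when the row and column indices differ by 1). Assume moreover that all entries of Q are real and all entries of P are purely imaginary. Then for each n ∈ {0,…,N}, the matrix Z(n) with entries Z(n)_{a,b} = (Ĝ_{a,b}(P,Q))_{n,n} satisfies Z(n)_{a,b} = 0 whenever a is odd or b is odd. -/

import Mathlib

/-- The Weyl-symmetrized operator `Ĝ_{a,b}(P,Q)`: `1/C(a+b,a)` times the sum over all
subsets `S` of `{1,…,a+b}` of size `a` of the ordered product `X_1 ⋯ X_{a+b}` with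
`X_i = P` if `i ∈ S` and `X_i = Q` otherwise. -/
noncomputable def weylG {N : ℕ} (P Q : Matrix (Fin (N + 1)) (Fin (N + 1)) ℂ) (a b : ℕ) :
    Matrix (Fin (N + 1)) (Fin (N + 1)) ℂ :=
  (((a + b).choose a : ℂ))⁻¹ •
    ∑ S ∈ Finset.univ.filter (fun S : Finset (Fin (a + b)) => S.card = a),
      (List.ofFn fun i : Fin (a + b) => if i ∈ S then P else Q).prod

/-- The matrix `Z(n)` with entries `Z(n)_{a,b} = (Ĝ_{a,b}(P,Q))_{n,n}`, `a,b ∈ {0,…,N}`. -/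
noncomputable def zMat {N : ℕ} (P Q : Matrix (Fin (N + 1)) (Fin (N + 1)) ℂ)
    (n : Fin (N + 1)) : Matrix (Fin (N + 1)) (Fin (N + 1)) ℂ :=
  Matrix.of fun a b : Fin (N + 1) => weylG P Q a.val b.val n n


lemma ofFn_reverse' {α : Type*} {m : ℕ} (f : Fin m → α) :
    (List.ofFn f).reverse = List.ofFn (fun i => f i.rev) := by
  apply List.ext_getElem
  · simp
  · intro i h1 h2
    simp only [List.getElem_reverse, List.getElem_ofFn]
    congr 1
    simp only [List.length_ofFn] at h1 h2
    ext
    simp [Fin.rev]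
    omega

lemma star_list_prod' {R : Type*} [Monoid R] [StarMul R] (L : List R) :
    star L.prod = (L.reverse.map star).prod := by
  induction L with
  | nil => simp
  | cons M L ih => simp [List.prod_cons, star_mul, ih]

lemma ofFn_smul_prod' {N m : ℕ} (f : Fin m → ℂ) (g : Fin m → Matrix (Fin (N+1)) (Fin (N+1)) ℂ) :
    (List.ofFn fun i => f i • g i).prod = (∏ i, f i) • (List.ofFn g).prod := by
  induction m with
  | zero => simp
  | succ k ih =>
    rw [List.ofFn_succ, List.ofFn_succ, List.prod_cons, List.prod_cons,
      Fin.prod_univ_succ, ih (fun i => f i.succ) (fun i => g i.succ),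
      smul_mul_assoc, mul_smul_comm, smul_smul]

lemma tri_prod_parity {N : ℕ} (L : List (Matrix (Fin (N+1)) (Fin (N+1)) ℂ))
    (hL : ∀ M ∈ L, ∀ i j : Fin (N+1), j.val ≠ i.val + 1 → i.val ≠ j.val + 1 → M i j = 0) :
    ∀ i j : Fin (N+1), (i.val + L.length) % 2 ≠ j.val % 2 → L.prod i j = 0 := by
  induction L with
  | nil =>
    intro i j h
    simp only [List.length_nil, Nat.add_zero] at h
    rw [List.prod_nil, Matrix.one_apply, if_neg]
    intro hij; rw [hij] at h; exact h rfl
  | cons M L ih =>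
    intro i j h
    rw [List.prod_cons, Matrix.mul_apply]
    apply Finset.sum_eq_zero
    intro k _
    by_cases hk : k.val = i.val + 1 ∨ i.val = k.val + 1
    · have hz : L.prod k j = 0 := by
        apply ih (fun M hM => hL M (List.mem_cons_of_mem _ hM)) k j
        simp only [List.length_cons] at h
        omega
      rw [hz, mul_zero]
    · push_neg at hk
      rw [hL M List.mem_cons_self i k hk.1 hk.2, zero_mul]

lemma key_sum_zero {N : ℕ}
    (P Q : Matrix (Fin (N + 1)) (Fin (N + 1)) ℂ)
    (hPh : P.IsHermitian) (hQh : Q.IsHermitian)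
    (hPtri : ∀ i j : Fin (N + 1), j.val ≠ i.val + 1 → i.val ≠ j.val + 1 → P i j = 0)
    (hQtri : ∀ i j : Fin (N + 1), j.val ≠ i.val + 1 → i.val ≠ j.val + 1 → Q i j = 0)
    (hQreal : ∀ i j : Fin (N + 1), (Q i j).im = 0)
    (hPimag : ∀ i j : Fin (N + 1), (P i j).re = 0)
    (n : Fin (N + 1)) (a b : ℕ) (hodd : Odd a ∨ Odd (a + b)) :
    (∑ S ∈ Finset.univ.filter (fun S : Finset (Fin (a + b)) => S.card = a),
      (List.ofFn fun i : Fin (a + b) => if i ∈ S then P else Q).prod) n n = 0 := by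
  set T := ∑ S ∈ Finset.univ.filter (fun S : Finset (Fin (a + b)) => S.card = a),
      (List.ofFn fun i : Fin (a + b) => if i ∈ S then P else Q).prod with hT
  rcases hodd with ha | hab
  swap
  · -- a+b odd : parity argument
    rw [hT, Matrix.sum_apply]
    apply Finset.sum_eq_zero
    intro S _
    apply tri_prod_parity
    · intro M hM
      rw [List.mem_ofFn] at hM
      obtain ⟨i, hi⟩ := hM
      intro x y hxy hyx
      have hi : (if i ∈ S then P else Q) = M := hi
      by_cases h : i ∈ S
      · rw [← hi, if_pos h]; exact hPtri x y hxy hyx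
      · rw [← hi, if_neg h]; exact hQtri x y hxy hyx
    · rw [List.length_ofFn]
      obtain ⟨k, hk⟩ := hab
      omega
  · -- a odd
    -- Claim 1: T is Hermitian, so T n n is real
    have hTh : T.conjTranspose = T := by
      rw [hT, Matrix.conjTranspose_sum]
      refine Finset.sum_nbij' (i := fun S => S.image Fin.rev) (j := fun S => S.image Fin.rev)
        ?_ ?_ ?_ ?_ ?_
      · intro S hS
        simp only [Finset.mem_filter, Finset.mem_univ, true_and] at hS ⊢
        rw [Finset.card_image_of_injective _ Fin.rev_injective, hS]
      · intro S hS
        simp only [Finset.mem_filter, Finset.mem_univ, true_and] at hS ⊢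
        rw [Finset.card_image_of_injective _ Fin.rev_injective, hS]
      · intro S _
        show Finset.image Fin.rev (Finset.image Fin.rev S) = S
        rw [Finset.image_image]
        ext x; simp [Fin.rev_rev]
      · intro S _
        show Finset.image Fin.rev (Finset.image Fin.rev S) = S
        rw [Finset.image_image]
        ext x; simp [Fin.rev_rev]
      · intro S _
        show ((List.ofFn fun i : Fin (a+b) => if i ∈ S then P else Q).prod).conjTranspose
            = (List.ofFn fun i : Fin (a+b) => if i ∈ S.image Fin.rev then P else Q).prod
        rw [show ((List.ofFn fun i : Fin (a+b) => if i ∈ S then P else Q).prod).conjTranspose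
            = star (List.ofFn fun i : Fin (a+b) => if i ∈ S then P else Q).prod from rfl,
          star_list_prod', ofFn_reverse', List.map_ofFn]
        congr 1
        apply congrArg List.ofFn
        funext i
        show star (if i.rev ∈ S then P else Q) = if i ∈ S.image Fin.rev then P else Q
        have hmem : i ∈ S.image Fin.rev ↔ i.rev ∈ S := by
          constructor
          · intro h
            obtain ⟨x, hx, rfl⟩ := Finset.mem_image.mp h
            rwa [Fin.rev_rev]
          · intro h
            exact Finset.mem_image.mpr ⟨i.rev, h, Fin.rev_rev i⟩
        by_cases h : i.rev ∈ S
        · rw [if_pos h, if_pos (hmem.mpr h)]; exact hPh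
        · rw [if_neg h, if_neg (fun hc => h (hmem.mp hc))]; exact hQh
    have hreal : (starRingEnd ℂ) (T n n) = T n n := by
      have := congrFun (congrFun hTh n) n
      rwa [Matrix.conjTranspose_apply] at this
    -- Claim 2: conj(T n n) = (-1)^a * T n n
    have hconj : (starRingEnd ℂ) (T n n) = (-1 : ℂ)^a * T n n := by
      rw [hT, Matrix.sum_apply, map_sum, Finset.mul_sum]
      apply Finset.sum_congr rfl
      intro S hS
      simp only [Finset.mem_filter, Finset.mem_univ, true_and] at hS
      have h1 : (starRingEnd ℂ) ((List.ofFn fun i : Fin (a+b) =>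
          if i ∈ S then P else Q).prod n n)
          = (((List.ofFn fun i : Fin (a+b) => if i ∈ S then P else Q).prod).map
            (starRingEnd ℂ)) n n := rfl
      have hrh := map_list_prod ((starRingEnd ℂ).mapMatrix :
        Matrix (Fin (N+1)) (Fin (N+1)) ℂ →+* Matrix (Fin (N+1)) (Fin (N+1)) ℂ)
        (List.ofFn fun i : Fin (a + b) => if i ∈ S then P else Q)
      simp only [RingHom.mapMatrix_apply] at hrh
      have hPc : P.map (starRingEnd ℂ) = -P := by
        ext i j
        simp only [Matrix.map_apply, Matrix.neg_apply]
        have := hPimag i j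
        apply Complex.ext <;> simp [this]
      have hQc : Q.map (starRingEnd ℂ) = Q := by
        ext i j
        simp only [Matrix.map_apply]
        have := hQreal i j
        apply Complex.ext <;> simp [this]
      have heq : (List.ofFn fun i : Fin (a + b) => if i ∈ S then P else Q).map
          (⇑((starRingEnd ℂ).mapMatrix :
            Matrix (Fin (N+1)) (Fin (N+1)) ℂ →+* Matrix (Fin (N+1)) (Fin (N+1)) ℂ))
          = List.ofFn fun i : Fin (a+b) =>
            (if i ∈ S then (-1 : ℂ) else 1) • (if i ∈ S then P else Q) := by
        rw [List.map_ofFn]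
        apply congrArg List.ofFn
        funext i
        show ((starRingEnd ℂ).mapMatrix) (if i ∈ S then P else Q)
            = (if i ∈ S then (-1 : ℂ) else 1) • (if i ∈ S then P else Q)
        by_cases h : i ∈ S
        · simp [h, RingHom.mapMatrix_apply, hPc]
        · simp [h, RingHom.mapMatrix_apply, hQc]
      have h2 : (((List.ofFn fun i : Fin (a+b) => if i ∈ S then P else Q).prod).map
          (starRingEnd ℂ))
          = ((-1 : ℂ)^a) • (List.ofFn fun i : Fin (a+b) => if i ∈ S then P else Q).prod := by
        rw [hrh, heq, ofFn_smul_prod']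
        congr 1
        rw [Finset.prod_ite, Finset.prod_const, Finset.prod_const, one_pow, mul_one]
        congr 1
        rw [Finset.filter_univ_mem, hS]
      rw [h1, h2, Matrix.smul_apply, smul_eq_mul]
    rw [hreal, Odd.neg_one_pow ha, neg_one_mul] at hconj
    exact add_self_eq_zero.mp (by linear_combination hconj)


/-- Vanishing of odd moments: if `P`, `Q` are Hermitian, tridiagonal with zero diagonal,
`Q` has real entries and `P` has purely imaginary entries, then `Z(n)_{a,b} = 0` whenever
`a` is odd or `b` is odd. -/
theorem zMat_odd_vanish {N : ℕ}
    (P Q : Matrix (Fin (N + 1)) (Fin (N + 1)) ℂ)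
    (hPh : P.IsHermitian) (hQh : Q.IsHermitian)
    (hPtri : ∀ i j : Fin (N + 1), j.val ≠ i.val + 1 → i.val ≠ j.val + 1 → P i j = 0)
    (hQtri : ∀ i j : Fin (N + 1), j.val ≠ i.val + 1 → i.val ≠ j.val + 1 → Q i j = 0)
    (hQreal : ∀ i j : Fin (N + 1), (Q i j).im = 0)
    (hPimag : ∀ i j : Fin (N + 1), (P i j).re = 0)
    (n : Fin (N + 1)) :
    ∀ a b : Fin (N + 1), (Odd a.val ∨ Odd b.val) → zMat P Q n a b = 0 := by
  intro a b h
  have hor : Odd a.val ∨ Odd (a.val + b.val) := by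
    rcases h with ha | hb
    · exact Or.inl ha
    · by_cases ha : Odd a.val
      · exact Or.inl ha
      · right
        rw [Nat.odd_add]
        simp [hb, Nat.not_odd_iff_even.mp ha, Nat.not_odd_iff_even.mpr (Nat.not_odd_iff_even.mp ha)]
  have hz := key_sum_zero P Q hPh hQh hPtri hQtri hQreal hPimag n a.val b.val hor
  show weylG P Q a.val b.val n n = 0
  rw [weylG, Matrix.smul_apply, hz, smul_zero]
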